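/- Let n ≥ 1, let b be a nonzero real number, and let a, c, d : Fin n → ℂ (indexed j = 1, …, n). If the function t ↦ Σ_{j=1}^{n} (a_j·e^{ibt} + c_j·e^{−ibt} + d_j)·t^{1−j} is o(t^{1−n}) as t → ∞, then a_j = c_j = d_j = 0 for all j = 1, …, n. -/

import Mathlib

open Filter Asymptotics
open Real

section AsymptoticHelpers

lemma oscLimit (b : ℝ) (hb : b ≠ 0) (a c d : ℂ)
    (h : Tendsto (fun t : ℝ => a * Complex.exp (Complex.I * (b * t))
          + c * Complex.exp (-(Complex.I * (b * t))) + d) atTop (nhds 0)) :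
    a = 0 ∧ c = 0 ∧ d = 0 := by
  have key : ∀ θ : ℝ, a * Complex.exp (Complex.I * θ) + c * Complex.exp (-(Complex.I * θ)) + d = 0 := by
    intro θ
    set ε : ℤ := if 0 < b then 1 else -1 with hε
    have hpos : (0:ℝ) < (ε:ℝ)/b := by
      rcases hb.lt_or_gt with hbneg | hbpos
      · simp only [hε, if_neg (not_lt.mpr hbneg.le)]
        push_cast
        rw [neg_div, lt_neg, neg_zero, one_div]
        exact inv_lt_zero.mpr hbneg
      · simp only [hε, if_pos hbpos]
        positivity
    set u : ℕ → ℝ := fun k => θ / b + ((ε:ℝ)/b) * (2 * π) * k with hu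
    have hut : Tendsto u atTop atTop := by
      apply tendsto_atTop_add_const_left
      exact (tendsto_natCast_atTop_atTop).const_mul_atTop (by positivity)
    have hbu : ∀ k : ℕ, b * u k = θ + ((ε * k : ℤ) : ℝ) * (2 * π) := by
      intro k
      simp only [hu]
      push_cast
      field_simp
    have hcast : ∀ k : ℕ, ((b:ℂ) * (u k : ℂ)) = ((θ:ℂ) + ((ε * k : ℤ) : ℂ) * (2 * π)) := by
      intro k
      have h2 : ((b * u k : ℝ) : ℂ) = ((θ + ((ε * k : ℤ) : ℝ) * (2 * π) : ℝ) : ℂ) := by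
        rw [hbu k]
      push_cast at h2
      push_cast
      exact h2
    have hexp : ∀ k : ℕ, Complex.exp (Complex.I * ((b:ℂ) * (u k : ℂ))) = Complex.exp (Complex.I * θ) := by
      intro k
      rw [hcast k, mul_add, Complex.exp_add,
        show Complex.I * (((ε * k : ℤ):ℂ) * (2 * π)) = ((ε * k : ℤ) : ℂ) * (2 * π * Complex.I) by ring,
        Complex.exp_int_mul_two_pi_mul_I, mul_one]
    have hexp' : ∀ k : ℕ, Complex.exp (-(Complex.I * ((b:ℂ) * (u k:ℂ)))) = Complex.exp (-(Complex.I * θ)) := by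
      intro k
      rw [hcast k,
        show -(Complex.I * ((θ:ℂ) + ((ε * k : ℤ):ℂ) * (2 * π)))
          = -(Complex.I * θ) + ((-(ε * k) : ℤ) : ℂ) * (2 * π * Complex.I) by push_cast; ring,
        Complex.exp_add, Complex.exp_int_mul_two_pi_mul_I, mul_one]
    have hcomp := h.comp hut
    have hconst : Tendsto (fun _ : ℕ => a * Complex.exp (Complex.I * θ) + c * Complex.exp (-(Complex.I * θ)) + d)
        atTop (nhds 0) := by
      apply hcomp.congr
      intro k
      simp only [Function.comp]
      rw [hexp k, hexp' k]
    exact tendsto_nhds_unique tendsto_const_nhds hconst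
  have e0 : Complex.exp (Complex.I * ((0:ℝ):ℂ)) = 1 := by simp
  have e1 : Complex.exp (Complex.I * ((π:ℝ):ℂ)) = -1 := by rw [mul_comm]; exact Complex.exp_pi_mul_I
  have e1' : Complex.exp (-(Complex.I * ((π:ℝ):ℂ))) = -1 := by
    rw [Complex.exp_neg, e1]; norm_num
  have e2 : Complex.exp (Complex.I * ((π/2:ℝ):ℂ)) = Complex.I := by
    rw [mul_comm, Complex.exp_mul_I]
    push_cast
    simp
  have e2' : Complex.exp (-(Complex.I * ((π/2:ℝ):ℂ))) = -Complex.I := by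
    rw [Complex.exp_neg, e2, Complex.inv_I]
  have e0' : Complex.exp (-(Complex.I * ((0:ℝ):ℂ))) = 1 := by simp
  have h0 := key 0
  have h1 := key π
  have h2 := key (π/2)
  rw [e0, e0'] at h0
  rw [e1, e1'] at h1
  rw [e2, e2'] at h2
  simp only [mul_one, mul_neg_one] at h0 h1
  have hd : d = 0 := by linear_combination (h0 + h1)/2
  subst hd
  have hac : a = c := by
    have hI : (a - c) * Complex.I = 0 := by linear_combination h2
    rcases mul_eq_zero.mp hI with hh | hh
    · exact sub_eq_zero.mp hh
    · exact absurd hh Complex.I_ne_zero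
  refine ⟨?_, ?_, rfl⟩
  · linear_combination h0/2 + hac/2
  · linear_combination h0/2 - hac/2


lemma normExpI (x : ℝ) : ‖Complex.exp (Complex.I * x)‖ = 1 := by
  simp [Complex.norm_exp]

lemma normExpI' (x : ℝ) : ‖Complex.exp (-(Complex.I * x))‖ = 1 := by
  simp [Complex.norm_exp]

lemma firstCoeff (m : ℕ) (b : ℝ) (hb : b ≠ 0) (a c d : Fin (m+1) → ℂ)
    (h : (fun t : ℝ => ∑ j : Fin (m+1),
          (a j * Complex.exp (Complex.I * (b * t))
            + c j * Complex.exp (-(Complex.I * (b * t))) + d j)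
          * ((t ^ ((1 : ℝ) - ((j : ℕ) + 1)) : ℝ) : ℂ))
        =o[atTop] fun t : ℝ => t ^ ((1 : ℝ) - (m+1 : ℕ))) :
    Tendsto (fun t : ℝ => a 0 * Complex.exp (Complex.I * (b * t))
          + c 0 * Complex.exp (-(Complex.I * (b * t))) + d 0) atTop (nhds 0) := by
  have hO : (fun t : ℝ => t ^ ((1:ℝ) - (m+1:ℕ))) =O[atTop] (fun _ : ℝ => (1:ℝ)) := by
    apply IsBigO.of_bound 1
    filter_upwards [eventually_ge_atTop 1] with t ht
    rw [norm_one, mul_one, Real.norm_eq_abs, abs_of_nonneg (Real.rpow_nonneg (by linarith) _)]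
    apply Real.rpow_le_one_of_one_le_of_nonpos ht
    push_cast
    linarith
  have hf : Tendsto (fun t : ℝ => ∑ j : Fin (m+1),
      (a j * Complex.exp (Complex.I * (b * t))
        + c j * Complex.exp (-(Complex.I * (b * t))) + d j)
      * ((t ^ ((1 : ℝ) - ((j : ℕ) + 1)) : ℝ) : ℂ)) atTop (nhds 0) :=
    (isLittleO_one_iff ℝ).mp (h.trans_isBigO hO)
  have htail : Tendsto (fun t : ℝ => ∑ j : Fin m,
      (a j.succ * Complex.exp (Complex.I * (b * t))
        + c j.succ * Complex.exp (-(Complex.I * (b * t))) + d j.succ)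
      * ((t ^ ((1 : ℝ) - ((j.succ : ℕ) + 1)) : ℝ) : ℂ)) atTop (nhds 0) := by
    have h0 : Tendsto (fun _ : ℕ => (0:ℂ)) atTop (nhds 0) := tendsto_const_nhds
    rw [show (0:ℂ) = ∑ _j : Fin m, (0:ℂ) by simp]
    apply tendsto_finset_sum
    intro j _
    have hbdd : ∀ᶠ t : ℝ in atTop, ‖(a j.succ * Complex.exp (Complex.I * (b * t))
        + c j.succ * Complex.exp (-(Complex.I * (b * t))) + d j.succ)
        * ((t ^ ((1 : ℝ) - ((j.succ : ℕ) + 1)) : ℝ) : ℂ)‖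
        ≤ (‖a j.succ‖ + ‖c j.succ‖ + ‖d j.succ‖) * t ^ (-(1 + (j:ℕ) : ℝ)) := by
      filter_upwards [eventually_gt_atTop 0] with t ht
      rw [norm_mul]
      have he : ((1:ℝ) - ((j.succ : ℕ) + 1)) = -(1 + (j:ℕ) : ℝ) := by
        rw [Fin.val_succ]; push_cast; ring
      rw [he]
      gcongr
      · calc ‖a j.succ * Complex.exp (Complex.I * (b * t))
            + c j.succ * Complex.exp (-(Complex.I * (b * t))) + d j.succ‖
            ≤ ‖a j.succ * Complex.exp (Complex.I * (b * t))
              + c j.succ * Complex.exp (-(Complex.I * (b * t)))‖ + ‖d j.succ‖ := norm_add_le _ _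
          _ ≤ ‖a j.succ * Complex.exp (Complex.I * (b * t))‖
              + ‖c j.succ * Complex.exp (-(Complex.I * (b * t)))‖ + ‖d j.succ‖ := by
              gcongr; exact norm_add_le _ _
          _ ≤ ‖a j.succ‖ + ‖c j.succ‖ + ‖d j.succ‖ := by
              rw [norm_mul, norm_mul]
              rw [show ((b:ℂ) * (t:ℂ)) = ((b*t : ℝ):ℂ) by push_cast; ring]
              rw [normExpI, normExpI', mul_one, mul_one]
      · rw [Complex.norm_real, Real.norm_eq_abs, abs_of_nonneg (Real.rpow_nonneg ht.le _)]
    apply squeeze_zero_norm' hbdd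
    rw [show (0:ℝ) = (‖a j.succ‖ + ‖c j.succ‖ + ‖d j.succ‖) * 0 by ring]
    exact (tendsto_rpow_neg_atTop (by positivity)).const_mul _
  have := hf.sub htail
  rw [sub_zero] at this
  apply this.congr
  intro t
  rw [Fin.sum_univ_succ]
  have : ((1 : ℝ) - (((0 : Fin (m+1)) : ℕ) + 1)) = 0 := by simp
  rw [this, Real.rpow_zero]
  push_cast
  ring



end AsymptoticHelpers

/-- Asymptotic linear independence of `e^{ibt}·t^{1-j}`, `e^{-ibt}·t^{1-j}`, `t^{1-j}`
for `j = 1, …, n` (here `a j`, `c j`, `d j` with `j : Fin n` denote the coefficients of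
order `j+1`): if the combination is `o(t^{1-n})` as `t → ∞`, all coefficients vanish. -/
theorem asymptotic_linear_independence_osc
    (n : ℕ) (hn : 1 ≤ n) (b : ℝ) (hb : b ≠ 0) (a c d : Fin n → ℂ)
    (h : (fun t : ℝ => ∑ j : Fin n,
          (a j * Complex.exp (Complex.I * (b * t))
            + c j * Complex.exp (-(Complex.I * (b * t))) + d j)
          * ((t ^ ((1 : ℝ) - ((j : ℕ) + 1)) : ℝ) : ℂ))
        =o[atTop] fun t : ℝ => t ^ ((1 : ℝ) - n)) :
    ∀ j : Fin n, a j = 0 ∧ c j = 0 ∧ d j = 0 := by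
  obtain ⟨m, rfl⟩ : ∃ m, n = m + 1 := ⟨n - 1, (Nat.succ_pred_eq_of_pos hn).symm⟩
  clear hn
  induction m with
  | zero =>
    intro j
    have h0 := oscLimit b hb _ _ _ (firstCoeff 0 b hb a c d h)
    have : j = 0 := Fin.ext (by omega)
    rw [this]
    exact h0
  | succ m ih =>
    have h0 := oscLimit b hb _ _ _ (firstCoeff (m+1) b hb a c d h)
    obtain ⟨ha0, hc0, hd0⟩ := h0
    -- multiply by t
    have hOc : (fun t : ℝ => (t:ℂ)) =O[atTop] (fun t : ℝ => t) := by
      apply IsBigO.of_bound 1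
      filter_upwards with t
      simp [Complex.norm_real]
    have h2 := hOc.mul_isLittleO h
    have hl : (fun t : ℝ => (t:ℂ) * ∑ j : Fin (m+1+1),
          (a j * Complex.exp (Complex.I * (b * t))
            + c j * Complex.exp (-(Complex.I * (b * t))) + d j)
          * ((t ^ ((1 : ℝ) - ((j : ℕ) + 1)) : ℝ) : ℂ))
        =ᶠ[atTop] (fun t : ℝ => ∑ j : Fin (m+1),
          (a j.succ * Complex.exp (Complex.I * (b * t))
            + c j.succ * Complex.exp (-(Complex.I * (b * t))) + d j.succ)
          * ((t ^ ((1 : ℝ) - ((j : ℕ) + 1)) : ℝ) : ℂ)) := by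
      filter_upwards [eventually_gt_atTop 0] with t ht
      rw [Fin.sum_univ_succ, ha0, hc0, hd0]
      simp only [zero_mul, zero_add, add_zero, mul_zero]
      rw [Finset.mul_sum]
      apply Finset.sum_congr rfl
      intro j _
      have hre : t * t ^ ((1:ℝ) - (((j.succ : ℕ):ℝ) + 1)) = t ^ ((1:ℝ) - (((j:ℕ):ℝ) + 1)) := by
        rw [show ((1:ℝ) - (((j:ℕ):ℝ) + 1)) = 1 + ((1:ℝ) - (((j.succ:ℕ):ℝ) + 1)) by
          rw [Fin.val_succ]; push_cast; ring]
        rw [Real.rpow_add ht, Real.rpow_one]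
      calc (t:ℂ) * ((a j.succ * Complex.exp (Complex.I * (b * t))
            + c j.succ * Complex.exp (-(Complex.I * (b * t))) + d j.succ)
          * ((t ^ ((1 : ℝ) - (((j.succ : Fin (m+1+1)) : ℕ) + 1)) : ℝ) : ℂ))
          = (a j.succ * Complex.exp (Complex.I * (b * t))
            + c j.succ * Complex.exp (-(Complex.I * (b * t))) + d j.succ)
          * ((t * t ^ ((1 : ℝ) - (((j.succ : ℕ):ℝ) + 1)) : ℝ) : ℂ) := by push_cast; ring
        _ = _ := by rw [hre]
    have hr : (fun t : ℝ => t * t ^ ((1:ℝ) - ((m+1+1 : ℕ):ℝ)))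
        =O[atTop] (fun t : ℝ => t ^ ((1:ℝ) - ((m+1 : ℕ):ℝ))) := by
      apply IsBigO.of_bound 1
      filter_upwards [eventually_gt_atTop 0] with t ht
      rw [one_mul, Real.norm_eq_abs, Real.norm_eq_abs,
        show t * t ^ ((1:ℝ) - ((m+1+1 : ℕ):ℝ)) = t ^ ((1:ℝ) - ((m+1 : ℕ):ℝ)) by
          rw [show ((1:ℝ) - ((m+1 : ℕ):ℝ)) = 1 + ((1:ℝ) - ((m+1+1 : ℕ):ℝ)) by push_cast; ring,
            Real.rpow_add ht, Real.rpow_one]]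
    have h3 := (h2.congr' hl EventuallyEq.rfl).trans_isBigO hr
    have ihres := ih (fun j => a j.succ) (fun j => c j.succ) (fun j => d j.succ) h3
    intro j
    rcases Fin.eq_zero_or_eq_succ j with hj | ⟨j', hj⟩
    · rw [hj]; exact ⟨ha0, hc0, hd0⟩
    · rw [hj]; exact ihres j'
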